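/- Let c ≥ 2, ñ ≥ 3, n = cñ, and let W be either the uniform-gossiping matrix W̄_{P^u} or the effective-resistance gossiping matrix W̄_{P^r} of the c-barbell graph. For every nonempty subset S₀ of {1,…,n} with |S₀| ≤ n/2 whose complement induces a connected subgraph of the c-barbell graph, there exists c₀ ∈ {1,…,⌊c/2⌋} such that Φ_{V_{c₀}}(W) ≤ Φ_{S₀}(W), where V_{c₀} = B₁ ∪ … ∪ B_{c₀} is the vertex set of the first c₀ blocks and Φ_S(W) = (1/|S|)·Σ_{i∈S, j∉S} W_{ij}. -/

import Mathlib

open Matrix BigOperators Finset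

/-- The `c`-barbell graph on `c*tn` vertices (0-indexed): for each `k = 0,…,c−1` the block
`B_k = {k*tn,…,(k+1)*tn−1}` induces a complete graph (two vertices are in the same block iff
their values have the same quotient by `tn`), and for each `k = 1,…,c−1` there is a bridge edge
between vertex `k*tn − 1` and vertex `k*tn` (i.e. between consecutive vertices `i, i+1` with
`(i+1) % tn = 0`). -/
def cBarbell (c tn : ℕ) : SimpleGraph (Fin (c * tn)) where
  Adj i j := i ≠ j ∧ (i.val / tn = j.val / tn ∨
    (j.val = i.val + 1 ∧ (i.val + 1) % tn = 0) ∨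
    (i.val = j.val + 1 ∧ (j.val + 1) % tn = 0))
  symm := by
    constructor
    rintro i j ⟨hne, h⟩
    refine ⟨hne.symm, ?_⟩
    rcases h with h | h | h
    · exact Or.inl h.symm
    · exact Or.inr (Or.inr h)
    · exact Or.inr (Or.inl h)
  loopless := by constructor; rintro i ⟨hne, -⟩; exact hne rfl

instance (c tn : ℕ) : DecidableRel (cBarbell c tn).Adj := fun i j =>
  inferInstanceAs (Decidable (i ≠ j ∧ (i.val / tn = j.val / tn ∨
    (j.val = i.val + 1 ∧ (i.val + 1) % tn = 0) ∨
    (i.val = j.val + 1 ∧ (j.val + 1) % tn = 0))))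

/-- The uniform edge-activation probability matrix: `P^u_{ij} = 1/(n d_i)` on edges, `0` else. -/
noncomputable def probUnif {n : ℕ} (G : SimpleGraph (Fin n)) [DecidableRel G.Adj] :
    Matrix (Fin n) (Fin n) ℝ :=
  Matrix.of fun i j => if G.Adj i j then 1 / ((n : ℝ) * (G.degree i : ℝ)) else 0

/-- The uniform-gossiping matrix `W̄_{P^u} = I − D^u/2 + (P^u + (P^u)ᵀ)/2`, where
`D^u_{ii} = Σ_j (P^u_{ij} + P^u_{ji})`. -/
noncomputable def gossipUnif {n : ℕ} (G : SimpleGraph (Fin n)) [DecidableRel G.Adj] :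
    Matrix (Fin n) (Fin n) ℝ :=
  (1 : Matrix (Fin n) (Fin n) ℝ)
    - (1 / 2 : ℝ) • Matrix.diagonal (fun i => ∑ j, (probUnif G i j + probUnif G j i))
    + (1 / 2 : ℝ) • (probUnif G + (probUnif G)ᵀ)

/-- The effective-resistance edge-activation probabilities on the `c`-barbell graph with
`n = c*tn`: `1/(2(n−1))` on bridge edges, `1/(tn(n−1))` on edges within a block, `0` else. -/
noncomputable def probResCBarbell (c tn : ℕ) : Matrix (Fin (c * tn)) (Fin (c * tn)) ℝ :=
  Matrix.of fun i j =>
    if (cBarbell c tn).Adj i j then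
      (if i.val / tn = j.val / tn then 1 / ((tn : ℝ) * ((c : ℝ) * (tn : ℝ) - 1))
       else 1 / (2 * ((c : ℝ) * (tn : ℝ) - 1)))
    else 0

/-- The effective-resistance gossiping matrix `W̄_{P^r} = I − D^r/2 + P^r` of the `c`-barbell
graph, where `D^r_{ii} = 2 Σ_j P^r_{ij}`. -/
noncomputable def gossipResCBarbell (c tn : ℕ) : Matrix (Fin (c * tn)) (Fin (c * tn)) ℝ :=
  (1 : Matrix (Fin (c * tn)) (Fin (c * tn)) ℝ)
    - (1 / 2 : ℝ) • Matrix.diagonal (fun i => 2 * ∑ j, probResCBarbell c tn i j)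
    + probResCBarbell c tn

/-- The subset conductance `Φ_S(W) = (1/|S|) Σ_{i∈S, j∉S} W_{ij}`. -/
noncomputable def subsetConductance {n : ℕ} (W : Matrix (Fin n) (Fin n) ℝ)
    (S : Finset (Fin n)) : ℝ :=
  (∑ i ∈ S, ∑ j ∈ Sᶜ, W i j) / (S.card : ℝ)


set_option maxHeartbeats 1000000

lemma card_filter_val_lt (K N : ℕ) (h : K ≤ N) :
    (Finset.univ.filter (fun i : Fin N => i.val < K)).card = K := by
  rw [Finset.card_filter, Fin.sum_univ_eq_sum_range (fun i => if i < K then 1 else 0),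
    ← Finset.card_filter, Finset.range_eq_Ico, Finset.Ico_filter_lt]
  simp [h]

lemma div_succ_eq (tn x : ℕ) (htn : 1 ≤ tn) (h : (x+1) % tn = 0) : (x+1)/tn = x/tn + 1 := by
  obtain ⟨q, hq⟩ := Nat.dvd_of_mod_eq_zero h
  rcases q with _ | q'
  · omega
  · have hexp : tn*(q'+1) = tn*q' + tn := by ring
    have h1 : x = tn*q' + (tn - 1) := by omega
    have h2 : x / tn = q' := by
      apply Nat.div_eq_of_lt_le
      · have : q' * tn = tn * q' := Nat.mul_comm _ _
        omega
      · have : (q'+1) * tn = tn * q' + tn := by ring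
        omega
    have h3 : (x+1)/tn = q' + 1 := by
      apply Nat.div_eq_of_lt_le
      · have : (q'+1) * tn = tn * q' + tn := by ring
        omega
      · have : (q'+1+1) * tn = tn * q' + tn + tn := by ring
        omega
    omega

lemma card_filter_div_eq (tn N k : ℕ) (htn : 0 < tn) (h : (k+1) * tn ≤ N) :
    (Finset.univ.filter (fun i : Fin N => i.val / tn = k)).card = tn := by
  rw [Finset.card_filter, Fin.sum_univ_eq_sum_range (fun i => if i / tn = k then 1 else 0),
    ← Finset.card_filter]
  have key : Finset.filter (fun i => i / tn = k) (Finset.range N) = Finset.Ico (k*tn) ((k+1)*tn) := by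
    ext x
    simp only [Finset.mem_filter, Finset.mem_range, Finset.mem_Ico]
    constructor
    · rintro ⟨hx, rfl⟩
      have h1 := Nat.div_mul_le_self x tn
      have h2 := Nat.div_add_mod x tn
      have h3 := Nat.mod_lt x htn
      refine ⟨h1, ?_⟩
      have e1 : (x/tn+1)*tn = x/tn*tn + tn := Nat.succ_mul _ _
      have e2 : tn * (x/tn) = x/tn * tn := Nat.mul_comm _ _
      omega
    · rintro ⟨h1, h2⟩
      exact ⟨lt_of_lt_of_le h2 h, Nat.div_eq_of_lt_le h1 h2⟩
  rw [key, Nat.card_Ico, Nat.succ_mul]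
  omega

section DegLemmas
variable {c tn : ℕ}

lemma blk_lt (i : Fin (c*tn)) (htn : 0 < tn) : i.val / tn < c :=
  Nat.div_lt_iff_lt_mul htn |>.mpr (by have := i.isLt; omega)

lemma degree_le_tn (htn : 3 ≤ tn) (i : Fin (c*tn)) : (cBarbell c tn).degree i ≤ tn := by
  classical
  have htn0 : 0 < tn := by omega
  rw [← SimpleGraph.card_neighborFinset_eq_degree]
  set q := i.val / tn with hq
  have hqc : q < c := blk_lt i htn0
  set B : Finset (Fin (c*tn)) := Finset.univ.filter (fun j => j.val / tn = q) with hB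
  have hBcard : B.card = tn := card_filter_div_eq tn (c*tn) q htn0 (by
    have := Nat.succ_le_of_lt hqc
    calc (q+1)*tn ≤ c*tn := Nat.mul_le_mul_right tn this)
  set N2 : Finset (Fin (c*tn)) :=
    Finset.univ.filter (fun j => (cBarbell c tn).Adj i j ∧ ¬ (j.val / tn = q)) with hN2
  have hsub : (cBarbell c tn).neighborFinset i ⊆ B.erase i ∪ N2 := by
    intro j hj
    rw [SimpleGraph.mem_neighborFinset] at hj
    by_cases hb : j.val / tn = q
    · apply Finset.mem_union_left
      exact Finset.mem_erase.mpr ⟨hj.ne', by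
        simp only [hB, Finset.mem_filter]; exact ⟨Finset.mem_univ _, hb⟩⟩
    · exact Finset.mem_union_right _ (by
        simp only [hN2, Finset.mem_filter]; exact ⟨Finset.mem_univ _, hj, hb⟩)
  have hN2card : N2.card ≤ 1 := by
    rw [Finset.card_le_one]
    intro a ha b hb
    simp only [hN2, Finset.mem_filter] at ha hb
    obtain ⟨-, ⟨hane, hadj⟩, hab⟩ := ha
    obtain ⟨-, ⟨hbne, hbdj⟩, hbb⟩ := hb
    have hadj' : (a.val = i.val + 1 ∧ (i.val+1) % tn = 0) ∨
        (i.val = a.val + 1 ∧ (a.val+1) % tn = 0) := by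
      rcases hadj with h | h | h
      · exact absurd h.symm hab
      · exact Or.inl h
      · exact Or.inr h
    have hbdj' : (b.val = i.val + 1 ∧ (i.val+1) % tn = 0) ∨
        (i.val = b.val + 1 ∧ (b.val+1) % tn = 0) := by
      rcases hbdj with h | h | h
      · exact absurd h.symm hbb
      · exact Or.inl h
      · exact Or.inr h
    apply Fin.ext
    rcases hadj' with ⟨h1, h2⟩ | ⟨h1, h2⟩ <;> rcases hbdj' with ⟨h3, h4⟩ | ⟨h3, h4⟩
    · omega
    · exfalso
      have d1 : tn ∣ (i.val + 1) := Nat.dvd_of_mod_eq_zero h2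
      have d2 : tn ∣ i.val := by
        have : b.val + 1 = i.val := by omega
        exact this ▸ Nat.dvd_of_mod_eq_zero h4
      have h5 : tn ∣ 1 := by
        have := Nat.dvd_sub d1 d2
        simpa using this
      have := Nat.le_of_dvd one_pos h5
      omega
    · exfalso
      have d1 : tn ∣ (i.val + 1) := Nat.dvd_of_mod_eq_zero h4
      have d2 : tn ∣ i.val := by
        have : a.val + 1 = i.val := by omega
        exact this ▸ Nat.dvd_of_mod_eq_zero h2
      have h5 : tn ∣ 1 := by
        have := Nat.dvd_sub d1 d2
        simpa using this
      have := Nat.le_of_dvd one_pos h5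
      omega
    · omega
  calc ((cBarbell c tn).neighborFinset i).card ≤ (B.erase i ∪ N2).card :=
        Finset.card_le_card hsub
    _ ≤ (B.erase i).card + N2.card := Finset.card_union_le _ _
    _ ≤ (tn - 1) + 1 := by
        apply Nat.add_le_add _ hN2card
        have : i ∈ B := by simp [hB, hq]
        rw [Finset.card_erase_of_mem this, hBcard]
    _ = tn := by omega

end DegLemmas

section DegLemmas2
variable {c tn : ℕ}

lemma blockFinset_sub_neighbors (htn : 3 ≤ tn) (i : Fin (c*tn)) :
    (Finset.univ.filter (fun j : Fin (c*tn) => j.val / tn = i.val / tn)).erase i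
      ⊆ (cBarbell c tn).neighborFinset i := by
  intro x hx
  rw [Finset.mem_erase, Finset.mem_filter] at hx
  rw [SimpleGraph.mem_neighborFinset]
  exact ⟨fun h => hx.1 h.symm, Or.inl hx.2.2.symm⟩

lemma degree_eq_left (htn : 3 ≤ tn) (i : Fin (c*tn)) (h1 : (i.val+1) % tn = 0)
    (h2 : i.val + 1 < c*tn) : (cBarbell c tn).degree i = tn := by
  classical
  have htn0 : 0 < tn := by omega
  refine le_antisymm (degree_le_tn htn i) ?_
  set j : Fin (c*tn) := ⟨i.val+1, h2⟩ with hj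
  set B : Finset (Fin (c*tn)) := Finset.univ.filter (fun x => x.val / tn = i.val / tn) with hB
  have hBcard : B.card = tn := card_filter_div_eq tn (c*tn) _ htn0 (by
    have := Nat.succ_le_of_lt (blk_lt i htn0)
    calc (i.val/tn+1)*tn ≤ c*tn := Nat.mul_le_mul_right tn this)
  have hjB : j ∉ B.erase i := by
    rw [Finset.mem_erase, Finset.mem_filter]
    rintro ⟨-, -, hdiv⟩
    have := div_succ_eq tn i.val (by omega) h1
    simp only [hj] at hdiv
    omega
  have hsub : insert j (B.erase i) ⊆ (cBarbell c tn).neighborFinset i := by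
    intro x hx
    rcases Finset.mem_insert.mp hx with rfl | hx
    · rw [SimpleGraph.mem_neighborFinset]
      refine ⟨?_, Or.inr (Or.inl ⟨rfl, h1⟩)⟩
      intro h
      have hv : (i:ℕ) = (⟨i.val+1, h2⟩ : Fin (c*tn)).val := congrArg Fin.val h
      simp only [Fin.val_mk] at hv
      omega
    · exact blockFinset_sub_neighbors htn i hx
  have hiB : i ∈ B := by simp [hB]
  calc tn = (insert j (B.erase i)).card := by
        rw [Finset.card_insert_of_notMem hjB, Finset.card_erase_of_mem hiB, hBcard]
        omega
    _ ≤ _ := Finset.card_le_card hsub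

lemma degree_eq_right (htn : 3 ≤ tn) (j : Fin (c*tn)) (h1 : j.val % tn = 0)
    (h2 : 1 ≤ j.val) : (cBarbell c tn).degree j = tn := by
  classical
  have htn0 : 0 < tn := by omega
  refine le_antisymm (degree_le_tn htn j) ?_
  have hplt : j.val - 1 < c*tn := by have := j.isLt; omega
  set p : Fin (c*tn) := ⟨j.val - 1, hplt⟩ with hp
  have hpv : (p:ℕ) = j.val - 1 := rfl
  have hpj : p.val + 1 = j.val := by omega
  set B : Finset (Fin (c*tn)) := Finset.univ.filter (fun x => x.val / tn = j.val / tn) with hB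
  have hBcard : B.card = tn := card_filter_div_eq tn (c*tn) _ htn0 (by
    have := Nat.succ_le_of_lt (blk_lt j htn0)
    calc (j.val/tn+1)*tn ≤ c*tn := Nat.mul_le_mul_right tn this)
  have hpB : p ∉ B.erase j := by
    rw [Finset.mem_erase, Finset.mem_filter]
    rintro ⟨-, -, hdiv⟩
    have := div_succ_eq tn p.val (by omega) (by rw [hpj]; exact h1)
    rw [hpj] at this
    omega
  have hsub : insert p (B.erase j) ⊆ (cBarbell c tn).neighborFinset j := by
    intro x hx
    rcases Finset.mem_insert.mp hx with rfl | hx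
    · rw [SimpleGraph.mem_neighborFinset]
      refine ⟨?_, Or.inr (Or.inr ⟨hpj.symm, by rw [hpj]; exact h1⟩)⟩
      intro h
      have hv : (j:ℕ) = (p:ℕ) := congrArg Fin.val h
      omega
    · exact blockFinset_sub_neighbors htn j hx
  have hjB : j ∈ B := by simp [hB]
  calc tn = (insert p (B.erase j)).card := by
        rw [Finset.card_insert_of_notMem hpB, Finset.card_erase_of_mem hjB, hBcard]
        omega
    _ ≤ _ := Finset.card_le_card hsub

end DegLemmas2

lemma ivt (P : ℕ → Prop) [DecidablePred P] : ∀ (d k : ℕ), P k → ¬P (k+d) →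
    ∃ j, k ≤ j ∧ j < k+d ∧ P j ∧ ¬P (j+1) := by
  intro d
  induction d with
  | zero => intro k h1 h2; exact absurd h1 h2
  | succ d ih =>
      intro k h1 h2
      by_cases h : P (k+d)
      · exact ⟨k+d, by omega, by omega, h, by rwa [show k+d+1 = k+(d+1) by omega]⟩
      · obtain ⟨j, hj1, hj2, hj3⟩ := ih k h1 h
        exact ⟨j, hj1, by omega, hj3⟩

lemma core (m tn s f β X : ℕ) (hm : 1 ≤ m) (htn : 3 ≤ tn) (hX1 : s ≤ X)
    (hX2 : s + 1 ≤ tn → s*(tn-s) ≤ X) (hfm : f ≤ m) (hsz : s + f*tn ≤ m*tn + tn/2)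
    (hβ : β = 0 → 1 ≤ f → 1 ≤ s) : s + f*tn ≤ 2*m*X + m*tn*β := by
  have hmz : (1:ℤ) ≤ (m:ℤ) := by exact_mod_cast hm
  have htnz : (3:ℤ) ≤ (tn:ℤ) := by exact_mod_cast htn
  rcases Nat.eq_zero_or_pos β with rfl | hβ1
  · rcases Nat.eq_zero_or_pos f with rfl | hf1
    · simp only [Nat.zero_mul, Nat.add_zero, Nat.mul_zero]
      calc s ≤ X := hX1
        _ ≤ 2*m*X := Nat.le_mul_of_pos_left X (by positivity)
    · have hs1 : 1 ≤ s := hβ rfl hf1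
      simp only [Nat.mul_zero, Nat.add_zero]
      rcases le_or_gt tn (s+1) with hcase | hcase
      · -- s ≥ tn - 1
        have hftn : f * tn + 1 ≤ m * tn := by omega
        have key : s + f*tn ≤ 2*m*s := by
          zify at hftn hcase ⊢
          nlinarith [mul_nonneg (show (0:ℤ) ≤ 2*(m:ℤ)-1 by linarith)
              (show (0:ℤ) ≤ (s:ℤ) - ((tn:ℤ)-1) by linarith),
            mul_nonneg (show (0:ℤ) ≤ (m:ℤ)-1 by linarith)
              (show (0:ℤ) ≤ (tn:ℤ)-2 by linarith)]
        calc s + f*tn ≤ 2*m*s := key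
          _ ≤ 2*m*X := Nat.mul_le_mul_left _ hX1
      · -- s ≤ tn - 1
        have hX2' := hX2 (by omega)
        have hstn : s ≤ tn := by omega
        have hXz : (s:ℤ)*((tn:ℤ)-(s:ℤ)) ≤ (X:ℤ) := by zify [hstn] at hX2'; exact hX2'
        have hfz : (f:ℤ) ≤ (m:ℤ) := by exact_mod_cast hfm
        have hsz1 : (1:ℤ) ≤ (s:ℤ) := by exact_mod_cast hs1
        have hstz : (s:ℤ) + 1 ≤ (tn:ℤ) := by exact_mod_cast (show s+1 ≤ tn by omega)
        have hfmz : (f:ℤ)*(tn:ℤ) ≤ (m:ℤ)*(tn:ℤ) :=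
          mul_le_mul_of_nonneg_right hfz (by linarith)
        have p1 : (m:ℤ)*((s:ℤ)*((tn:ℤ)-s)) ≤ (m:ℤ)*(X:ℤ) :=
          mul_le_mul_of_nonneg_left hXz (by linarith)
        rcases le_or_gt (2*s) tn with hs2 | hs2
        · -- 2s ≤ tn
          have hs2z : 2*(s:ℤ) ≤ (tn:ℤ) := by exact_mod_cast hs2
          have hA : (0:ℤ) ≤ (m:ℤ)*(s:ℤ)*((tn:ℤ)-2*s) :=
            mul_nonneg (mul_nonneg (by linarith) (by linarith)) (by linarith)
          have key : (s:ℤ) + (f:ℤ)*(tn:ℤ) ≤ 2*(m:ℤ)*(X:ℤ) := by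
            rcases le_or_gt 2 s with hs3 | hs3
            · have hs3z : (2:ℤ) ≤ (s:ℤ) := by exact_mod_cast hs3
              have hmtn : (3:ℤ) ≤ (m:ℤ)*(tn:ℤ) :=
                le_trans htnz (le_mul_of_one_le_left (by linarith) hmz)
              have hD : (0:ℤ) ≤ ((s:ℤ)-1)*((m:ℤ)*(tn:ℤ)-3) :=
                mul_nonneg (by linarith) (by linarith)
              nlinarith [p1]
            · have hseq : (s:ℤ) = 1 := by exact_mod_cast (show s = 1 by omega)
              have hE : (0:ℤ) ≤ ((m:ℤ)-1)*((tn:ℤ)-2) :=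
                mul_nonneg (by linarith) (by linarith)
              rw [hseq] at hXz
              have p2 : (m:ℤ)*((tn:ℤ)-1) ≤ (m:ℤ)*(X:ℤ) :=
                mul_le_mul_of_nonneg_left (by linarith) (by linarith)
              rw [hseq]
              nlinarith [p2]
          exact_mod_cast key
        · -- 2s > tn
          have hftn : f * tn + 1 ≤ m * tn := by omega
          have hftnz : (f:ℤ)*(tn:ℤ) + 1 ≤ (m:ℤ)*(tn:ℤ) := by exact_mod_cast hftn
          have hs3z : (2:ℤ) ≤ (s:ℤ) := by
            have : 2 ≤ s := by omega
            exact_mod_cast this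
          have h1 : (0:ℤ) ≤ (m:ℤ)*(((s:ℤ)-1)*((tn:ℤ)-s-1)) := by
            apply mul_nonneg (by linarith) (mul_nonneg (by linarith) (by linarith))
          have h2 : (0:ℤ) ≤ (m:ℤ)*((s:ℤ)*((tn:ℤ)-s-1)) := by
            apply mul_nonneg (by linarith) (mul_nonneg (by linarith) (by linarith))
          have h3 : (0:ℤ) ≤ ((m:ℤ)-1)*((s:ℤ)-1) := by
            apply mul_nonneg (by linarith) (by linarith)
          have key : (s:ℤ) + (f:ℤ)*(tn:ℤ) ≤ 2*(m:ℤ)*(X:ℤ) := by nlinarith [p1]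
          exact_mod_cast key
  · have h1 : f * tn ≤ m * tn * β := by
      calc f * tn ≤ m * tn := Nat.mul_le_mul_right _ hfm
        _ ≤ m * tn * β := Nat.le_mul_of_pos_right _ hβ1
    have h2 : s ≤ 2*m*X := le_trans hX1 (Nat.le_mul_of_pos_left X (by positivity))
    omega


lemma main_aux (c tn : ℕ) (hc : 2 ≤ c) (htn : 3 ≤ tn)
    (W : Matrix (Fin (c * tn)) (Fin (c * tn)) ℝ) (w1 wB : ℝ)
    (hw1 : 0 ≤ w1) (hwB : 0 < wB) (hw1B : wB * 2 ≤ w1 * tn)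
    (hW0 : ∀ i j : Fin (c*tn), i ≠ j → ¬(cBarbell c tn).Adj i j → W i j = 0)
    (hW1 : ∀ i j : Fin (c*tn), (cBarbell c tn).Adj i j → i.val/tn = j.val/tn → w1 ≤ W i j)
    (hW2 : ∀ i j : Fin (c*tn), (cBarbell c tn).Adj i j → i.val/tn ≠ j.val/tn → wB ≤ W i j)
    (hW3 : ∀ i j : Fin (c*tn), (cBarbell c tn).Adj i j → i.val/tn ≠ j.val/tn → W i j ≤ wB)
    (S0 : Finset (Fin (c * tn)))
    (hS0ne : S0.Nonempty) (hS0card : 2 * S0.card ≤ c * tn) :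
    ∃ c0 : ℕ, 1 ≤ c0 ∧ c0 ≤ c / 2 ∧
      subsetConductance W (Finset.univ.filter (fun i => i.val < c0 * tn)) ≤
        subsetConductance W S0 := by
  classical
  have htn0 : 0 < tn := by omega
  have hn0 : 0 < c * tn := by positivity
  set c0 := c / 2 with hc0def
  have hc01 : 1 ≤ c0 := by omega
  have hc0c : c0 + 1 ≤ c := by omega
  refine ⟨c0, hc01, le_refl _, ?_⟩
  set G := cBarbell c tn with hG
  -- weight nonnegativity off diagonal
  have hWnn : ∀ i j : Fin (c*tn), i ≠ j → 0 ≤ W i j := by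
    intro i j hne
    by_cases hadj : G.Adj i j
    · by_cases hblk : i.val/tn = j.val/tn
      · exact le_trans hw1 (hW1 i j hadj hblk)
      · exact le_trans (le_of_lt hwB) (hW2 i j hadj hblk)
    · rw [hW0 i j hne hadj]
  -- the V side
  set V := Finset.univ.filter (fun i : Fin (c*tn) => i.val < c0 * tn) with hV
  have hc0tn_le : c0 * tn ≤ c * tn := Nat.mul_le_mul_right _ (by omega)
  have hc0tn_lt : c0 * tn < c * tn := by
    have : c0 * tn < c0 * tn + tn := by omega
    have h2 : c0 * tn + tn = (c0+1)*tn := by ring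
    have h3 : (c0+1)*tn ≤ c*tn := Nat.mul_le_mul_right _ hc0c
    omega
  have hVcard : V.card = c0 * tn := card_filter_val_lt _ _ hc0tn_le
  have hc0tn_pos : 0 < c0 * tn := by positivity
  set i0 : Fin (c*tn) := ⟨c0*tn - 1, by omega⟩ with hi0
  set j0 : Fin (c*tn) := ⟨c0*tn, hc0tn_lt⟩ with hj0
  have hi0v : (i0:ℕ) = c0*tn - 1 := rfl
  have hj0v : (j0:ℕ) = c0*tn := rfl
  have htn_le : tn ≤ c0*tn := by
    calc tn = 1*tn := (Nat.one_mul tn).symm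
    _ ≤ c0*tn := Nat.mul_le_mul_right _ hc01
  have hsucc : (i0:ℕ) + 1 = c0*tn := by omega
  have hmod : ((i0:ℕ) + 1) % tn = 0 := by
    rw [hsucc]; exact Nat.mul_mod_left c0 tn
  have hadj0 : G.Adj i0 j0 := by
    refine ⟨?_, Or.inr (Or.inl ⟨by omega, hmod⟩)⟩
    intro h
    have : (i0:ℕ) = (j0:ℕ) := congrArg Fin.val h
    omega
  have hblk0 : (i0:Fin (c*tn)).val/tn ≠ (j0:Fin (c*tn)).val/tn := by
    have := div_succ_eq tn i0.val (by omega) hmod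
    rw [hsucc] at this
    rw [hj0v]
    omega
  -- numerator over V is exactly W i0 j0
  have hi0V : i0 ∈ V := by
    simp only [hV, Finset.mem_filter]
    exact ⟨Finset.mem_univ _, by omega⟩
  have hj0V : j0 ∈ Vᶜ := by
    rw [Finset.mem_compl, hV, Finset.mem_filter]
    push_neg
    intro _
    omega
  have hblkV : ∀ i : Fin (c*tn), i ∈ V → ∀ j : Fin (c*tn), j ∈ Vᶜ →
      i.val/tn ≠ j.val/tn := by
    intro i hi j hj
    simp only [hV, Finset.mem_filter, Finset.mem_compl] at hi hj
    push_neg at hj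
    have h1 : i.val/tn < c0 := (Nat.div_lt_iff_lt_mul htn0).mpr (by
      have := hi.2; omega)
    have h2 : c0 ≤ j.val/tn := (Nat.le_div_iff_mul_le htn0).mpr (by
      have := hj (Finset.mem_univ j); omega)
    omega
  have hnumV : ∑ i ∈ V, ∑ j ∈ Vᶜ, W i j = W i0 j0 := by
    rw [Finset.sum_eq_single_of_mem i0 hi0V]
    · rw [Finset.sum_eq_single_of_mem j0 hj0V]
      intro j hj hjne
      apply hW0
      · intro h
        simp only [hV, Finset.mem_compl, Finset.mem_filter] at hj
        push_neg at hj
        have := hj (Finset.mem_univ j)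
        omega
      · rintro ⟨hne, hcase⟩
        rcases hcase with h | h | h
        · exact hblkV i0 hi0V j hj h
        · apply hjne
          apply Fin.ext
          omega
        · simp only [hV, Finset.mem_compl, Finset.mem_filter] at hj
          push_neg at hj
          have := hj (Finset.mem_univ j)
          omega
    · intro i hi hine
      apply Finset.sum_eq_zero
      intro j hj
      have hi' := hi
      have hj' := hj
      simp only [hV, Finset.mem_filter, Finset.mem_compl] at hi' hj'
      push_neg at hj'
      have hjge := hj' (Finset.mem_univ j)
      have hile := hi'.2
      apply hW0
      · intro h
        rw [h] at hile
        omega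
      · rintro ⟨hne, hcase⟩
        rcases hcase with h | h | h
        · exact hblkV i hi j hj h
        · apply hine
          apply Fin.ext
          rw [hi0v]
          omega
        · omega
  -- S0 side: block counts
  set a : ℕ → ℕ := fun k => (S0.filter (fun i => i.val/tn = k)).card with ha
  set b : ℕ → ℕ := fun k => (S0ᶜ.filter (fun i => i.val/tn = k)).card with hb
  have hab : ∀ k, k < c → a k + b k = tn := by
    intro k hk
    have hdisj : Disjoint (S0.filter (fun i => i.val/tn = k))
        (S0ᶜ.filter (fun i => i.val/tn = k)) :=
      Finset.disjoint_filter_filter disjoint_compl_right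
    have hunion : S0.filter (fun i => i.val/tn = k) ∪ S0ᶜ.filter (fun i => i.val/tn = k)
        = Finset.univ.filter (fun i => i.val/tn = k) := by
      rw [← Finset.filter_union, Finset.union_compl]
    have := Finset.card_union_of_disjoint hdisj
    rw [hunion] at this
    rw [card_filter_div_eq tn (c*tn) k htn0 (Nat.mul_le_mul_right _ (by omega))] at this
    show (S0.filter (fun i => i.val/tn = k)).card + (S0ᶜ.filter (fun i => i.val/tn = k)).card = tn
    omega
  have hsumA : ∑ k ∈ Finset.range c, a k = S0.card := by
    rw [ha]
    exact (Finset.card_eq_sum_card_fiberwise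
      (fun i _ => Finset.mem_range.mpr (blk_lt i htn0))).symm
  set X : ℕ := ∑ k ∈ Finset.range c, a k * b k with hX
  set F : Finset ℕ := (Finset.range c).filter (fun k => a k = tn) with hF
  set f : ℕ := F.card with hf
  have hfAsum : ∑ k ∈ F, a k = f * tn := by
    rw [hf, Finset.card_eq_sum_ones, Finset.sum_mul, one_mul]
    apply Finset.sum_congr rfl
    intro k hk
    exact (Finset.mem_filter.mp hk).2
  have hftn_le : f * tn ≤ S0.card := by
    rw [← hsumA, ← hfAsum]
    exact Finset.sum_le_sum_of_subset (Finset.filter_subset _ _)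
  set s : ℕ := S0.card - f * tn with hs
  have hfs : f * tn + s = S0.card := by omega
  set Fc : Finset ℕ := (Finset.range c).filter (fun k => ¬ a k = tn) with hFc
  have hsplit : ∑ k ∈ F, a k + ∑ k ∈ Fc, a k = ∑ k ∈ Finset.range c, a k :=
    Finset.sum_filter_add_sum_filter_not _ _ _
  have hFcsum : ∑ k ∈ Fc, a k = s := by omega
  have hbpos : ∀ k ∈ Fc, 1 ≤ b k := by
    intro k hk
    rw [hFc, Finset.mem_filter, Finset.mem_range] at hk
    have h1 := hab k hk.1
    have h2 : a k ≤ tn := by omega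
    have := hk.2
    omega
  have hXsplit : ∑ k ∈ Fc, a k * b k ≤ X := by
    rw [hX, ← Finset.sum_filter_add_sum_filter_not (Finset.range c) (fun k => ¬ a k = tn)]
    rw [← hFc]
    exact Nat.le_add_right _ _
  have hX1 : s ≤ X := by
    calc s = ∑ k ∈ Fc, a k := hFcsum.symm
      _ ≤ ∑ k ∈ Fc, a k * b k := Finset.sum_le_sum (fun k hk => by
          have := hbpos k hk
          calc a k = a k * 1 := (Nat.mul_one _).symm
            _ ≤ a k * b k := Nat.mul_le_mul_left _ this)
      _ ≤ X := hXsplit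
  have hX2 : s + 1 ≤ tn → s*(tn-s) ≤ X := by
    intro hstn
    have hak_le : ∀ k ∈ Fc, a k ≤ s := by
      intro k hk
      rw [← hFcsum]
      exact Finset.single_le_sum (fun _ _ => Nat.zero_le _) hk
    calc s*(tn-s) = (∑ k ∈ Fc, a k) * (tn - s) := by rw [hFcsum]
      _ = ∑ k ∈ Fc, a k * (tn - s) := Finset.sum_mul _ _ _
      _ ≤ ∑ k ∈ Fc, a k * b k := Finset.sum_le_sum (fun k hk => by
          apply Nat.mul_le_mul_left
          have h1 := hab k (Finset.mem_range.mp (Finset.mem_of_mem_filter k hk))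
          have h2 := hak_le k hk
          omega)
      _ ≤ X := hXsplit
  have hfm : f ≤ c0 := by
    have h1 : (2*f)*tn ≤ c*tn := by
      have : 2*(f*tn) ≤ 2*S0.card := by omega
      calc (2*f)*tn = 2*(f*tn) := by ring
        _ ≤ 2*S0.card := this
        _ ≤ c*tn := hS0card
    have h2 : 2*f ≤ c := Nat.le_of_mul_le_mul_right h1 htn0
    omega
  have hsz : s + f*tn ≤ c0*tn + tn/2 := by
    have h1 : c*tn ≤ 2*(c0*tn) + tn := by
      have hcc : 2*c0 + c % 2 = c := by omega
      calc c*tn = (2*c0 + c%2)*tn := by rw [hcc]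
        _ = 2*(c0*tn) + (c%2)*tn := by ring
        _ ≤ 2*(c0*tn) + 1*tn := by
            have : c % 2 ≤ 1 := by omega
            have := Nat.mul_le_mul_right tn this
            omega
        _ = 2*(c0*tn) + tn := by ring
    omega
  -- full and empty block membership
  have hfull : ∀ k, k < c → a k = tn → ∀ i : Fin (c*tn), i.val/tn = k → i ∈ S0 := by
    intro k hk hak i hik
    have hsub : S0.filter (fun i => i.val/tn = k) ⊆ Finset.univ.filter (fun i => i.val/tn = k) :=
      Finset.filter_subset_filter _ (Finset.subset_univ S0)
    have hcards : (Finset.univ.filter (fun i : Fin (c*tn) => i.val/tn = k)).card ≤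
        (S0.filter (fun i => i.val/tn = k)).card := by
      rw [card_filter_div_eq tn (c*tn) k htn0 (Nat.mul_le_mul_right _ (by omega))]
      have hak' : (S0.filter (fun i => i.val/tn = k)).card = tn := hak
      omega
    have heq := Finset.eq_of_subset_of_card_le hsub hcards
    have : i ∈ S0.filter (fun i => i.val/tn = k) := by
      rw [heq, Finset.mem_filter]
      exact ⟨Finset.mem_univ _, hik⟩
    exact Finset.mem_of_mem_filter i this
  have hempty : ∀ k, a k = 0 → ∀ i : Fin (c*tn), i.val/tn = k → i ∉ S0 := by
    intro k hak i hik hiS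
    have : i ∈ S0.filter (fun i => i.val/tn = k) := Finset.mem_filter.mpr ⟨hiS, hik⟩
    have hpos := Finset.card_pos.mpr ⟨i, this⟩
    have hak' : (S0.filter (fun i => i.val/tn = k)).card = 0 := hak
    omega
  -- pointwise same-block lower bound
  have hptwise : ∀ i ∈ S0, ∀ j ∈ S0ᶜ,
      (if i.val/tn = j.val/tn then w1 else 0) ≤ W i j := by
    intro i hi j hj
    have hne : i ≠ j := by
      intro h
      exact (Finset.mem_compl.mp hj) (h ▸ hi)
    by_cases hblk : i.val/tn = j.val/tn
    · rw [if_pos hblk]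
      exact hW1 i j ⟨hne, Or.inl hblk⟩ hblk
    · rw [if_neg hblk]
      exact hWnn i j hne
  have hsum1 : ∑ i ∈ S0, ∑ j ∈ S0ᶜ, (if i.val/tn = j.val/tn then w1 else 0)
      = (X:ℝ) * w1 := by
    have hinner : ∀ i ∈ S0,
        ∑ j ∈ S0ᶜ, (if i.val/tn = j.val/tn then w1 else 0) = (b (i.val/tn) : ℝ) * w1 := by
      intro i hi
      rw [← Finset.sum_filter]
      rw [Finset.sum_const]
      have hfe : S0ᶜ.filter (fun j => i.val/tn = j.val/tn)
          = S0ᶜ.filter (fun j => j.val/tn = i.val/tn) := by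
        apply Finset.filter_congr
        intro j _
        exact eq_comm
      rw [hfe]
      have : b (i.val/tn) = (S0ᶜ.filter (fun j => j.val/tn = i.val/tn)).card := rfl
      rw [this]
      rw [nsmul_eq_mul]
    rw [Finset.sum_congr rfl hinner]
    rw [← Finset.sum_fiberwise_of_maps_to
      (fun i (hi : i ∈ S0) => Finset.mem_range.mpr (blk_lt i htn0))
      (fun i => (b (i.val/tn) : ℝ) * w1)]
    have hXcast : (X:ℝ) = ∑ k ∈ Finset.range c, (a k : ℝ) * (b k : ℝ) := by
      rw [hX]
      push_cast
      rfl
    rw [hXcast, Finset.sum_mul]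
    apply Finset.sum_congr rfl
    intro k hk
    have : ∀ i ∈ S0.filter (fun i => i.val/tn = k),
        (b (i.val/tn) : ℝ) * w1 = (b k : ℝ) * w1 := by
      intro i hi
      rw [(Finset.mem_filter.mp hi).2]
    rw [Finset.sum_congr rfl this, Finset.sum_const, nsmul_eq_mul]
    have hak : (S0.filter (fun i => i.val/tn = k)).card = a k := rfl
    rw [hak]
    ring
  set num : ℝ := ∑ i ∈ S0, ∑ j ∈ S0ᶜ, W i j with hnum
  have hnum_ge1 : (X:ℝ) * w1 ≤ num := by
    rw [← hsum1, hnum]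
    apply Finset.sum_le_sum
    intro i hi
    apply Finset.sum_le_sum
    intro j hj
    exact hptwise i hi j hj
  have hScard_pos : 0 < S0.card := Finset.card_pos.mpr hS0ne
  -- main bound, case split on bridge existence
  have hmain : (S0.card:ℝ) * wB ≤ ((c0*tn : ℕ):ℝ) * num := by
    by_cases hbr : ∃ i ∈ S0, ∃ j ∈ S0ᶜ, G.Adj i j ∧ i.val/tn ≠ j.val/tn
    · obtain ⟨iB, hiBS, jB, hjBS, hadjB, hblkB⟩ := hbr
      have hcore : s + f*tn ≤ 2*c0*X + c0*tn*1 :=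
        core c0 tn s f 1 X hc01 htn hX1 hX2 hfm hsz (fun h => absurd h one_ne_zero)
      rw [Nat.mul_one] at hcore
      have hcard_le : S0.card ≤ 2*c0*X + c0*tn := by
        calc S0.card = s + f*tn := by omega
          _ ≤ 2*c0*X + c0*tn := hcore
      -- extra bridge weight
      have hDnn : ∀ i ∈ S0, ∀ j ∈ S0ᶜ,
          0 ≤ W i j - (if i.val/tn = j.val/tn then w1 else 0) := by
        intro i hi j hj
        have := hptwise i hi j hj
        linarith
      have hextra : (X:ℝ) * w1 + wB ≤ num := by
        have hsplit2 : num = (∑ i ∈ S0, ∑ j ∈ S0ᶜ, (if i.val/tn = j.val/tn then w1 else 0))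
            + ∑ i ∈ S0, ∑ j ∈ S0ᶜ, (W i j - (if i.val/tn = j.val/tn then w1 else 0)) := by
          rw [← Finset.sum_add_distrib]
          apply Finset.sum_congr rfl
          intro i _
          rw [← Finset.sum_add_distrib]
          apply Finset.sum_congr rfl
          intro j _
          ring
        rw [hsplit2, hsum1]
        have h1 : wB ≤ ∑ i ∈ S0, ∑ j ∈ S0ᶜ, (W i j - (if i.val/tn = j.val/tn then w1 else 0)) := by
          have h2 : wB ≤ ∑ j ∈ S0ᶜ, (W iB j - (if iB.val/tn = j.val/tn then w1 else 0)) := by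
            have h3 : wB ≤ W iB jB - (if iB.val/tn = jB.val/tn then w1 else 0) := by
              rw [if_neg hblkB]
              have := hW2 iB jB hadjB hblkB
              linarith
            calc wB ≤ W iB jB - (if iB.val/tn = jB.val/tn then w1 else 0) := h3
              _ ≤ _ := Finset.single_le_sum (fun j hj => hDnn iB hiBS j hj) hjBS
          calc wB ≤ _ := h2
            _ ≤ _ := Finset.single_le_sum
                (f := fun i => ∑ j ∈ S0ᶜ, (W i j - (if i.val/tn = j.val/tn then w1 else 0)))
                (fun i hi => Finset.sum_nonneg (fun j hj => hDnn i hi j hj)) hiBS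
        linarith
      have hc1 : ((S0.card:ℕ):ℝ) ≤ 2*(c0:ℝ)*(X:ℝ) + (c0:ℝ)*(tn:ℝ) := by
        calc ((S0.card:ℕ):ℝ) ≤ ((2*c0*X + c0*tn : ℕ):ℝ) := Nat.cast_le.mpr hcard_le
          _ = 2*(c0:ℝ)*(X:ℝ) + (c0:ℝ)*(tn:ℝ) := by push_cast; ring
      have hXnn : (0:ℝ) ≤ (X:ℝ) := Nat.cast_nonneg X
      have hc0tnR : (0:ℝ) < ((c0*tn:ℕ):ℝ) := by exact_mod_cast hc0tn_pos
      push_cast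
      push_cast at hc1 hc0tnR
      nlinarith [mul_le_mul_of_nonneg_left hextra (le_of_lt hc0tnR),
        mul_nonneg (mul_nonneg (Nat.cast_nonneg c0 : (0:ℝ) ≤ c0) hXnn) (by linarith : (0:ℝ) ≤ w1*tn - wB*2)]
    · -- no bridge
      have hbeta : (1:ℕ) ≤ f → 1 ≤ s := by
        intro hf1
        by_contra hs0
        have hs0' : s = 0 := by omega
        -- all non-full blocks are empty
        have hallz : ∀ k ∈ Fc, a k = 0 := by
          intro k hk
          have h1 : a k ≤ ∑ k ∈ Fc, a k := Finset.single_le_sum (fun _ _ => Nat.zero_le _) hk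
          omega
        -- exists full block
        obtain ⟨k1, hk1⟩ := Finset.card_pos.mp (by omega : 0 < F.card)
        have hk1' := Finset.mem_filter.mp hk1
        have hk1c : k1 < c := Finset.mem_range.mp hk1'.1
        -- exists non-full block
        have hk2ex : ∃ k2, k2 < c ∧ a k2 = 0 := by
          by_contra hno
          push_neg at hno
          have hallfull : ∀ k ∈ Finset.range c, a k = tn := by
            intro k hk
            by_contra hne
            have : k ∈ Fc := Finset.mem_filter.mpr ⟨hk, hne⟩
            exact absurd (hallz k this) (hno k (Finset.mem_range.mp hk))
          have : F = Finset.range c := Finset.filter_true_of_mem hallfull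
          have hfc : f = c := by rw [hf, this, Finset.card_range]
          omega
        obtain ⟨k2, hk2c, hk2⟩ := hk2ex
        -- discrete IVT gives adjacent full/empty pair, then a bridge crossing
        have hPk1 : a k1 = tn := hk1'.2
        have hak2 : ¬ (a k2 = tn) := by omega
        have hbridge : ∀ jj, jj + 1 < c → a jj = tn → a (jj+1) = 0 → False := by
          intro jj hjc hfull' hempty'
          have hub : (jj+1)*tn - 1 < c*tn := by
            have : (jj+1)*tn ≤ c*tn := Nat.mul_le_mul_right _ (by omega)
            omega
          have hvb : (jj+1)*tn < c*tn := by
            have h3 : (jj+1+1)*tn ≤ c*tn := Nat.mul_le_mul_right _ (by omega)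
            have h4 : (jj+1+1)*tn = (jj+1)*tn + tn := by ring
            omega
          set u : Fin (c*tn) := ⟨(jj+1)*tn - 1, hub⟩ with hu
          set v : Fin (c*tn) := ⟨(jj+1)*tn, hvb⟩ with hv
          have huv : (u:ℕ) = (jj+1)*tn - 1 := rfl
          have hvv : (v:ℕ) = (jj+1)*tn := rfl
          have htnle : tn ≤ (jj+1)*tn := by
            calc tn = 1*tn := (Nat.one_mul tn).symm
            _ ≤ _ := Nat.mul_le_mul_right _ (by omega)
          have husucc : (u:ℕ) + 1 = (jj+1)*tn := by omega
          have humod : ((u:ℕ)+1) % tn = 0 := by rw [husucc]; exact Nat.mul_mod_left _ _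
          have hudiv : (u:ℕ)/tn = jj := by
            apply Nat.div_eq_of_lt_le
            · have : (jj+1)*tn = jj*tn + tn := by ring
              omega
            · have : (jj+1)*tn = jj*tn + tn := by ring
              omega
          have hvdiv : (v:ℕ)/tn = jj+1 := by
            apply Nat.div_eq_of_lt_le
            · exact le_refl _
            · have : (jj+1+1)*tn = (jj+1)*tn + tn := by ring
              omega
          have huS : u ∈ S0 := hfull jj (by omega) hfull' u hudiv
          have hvS : v ∈ S0ᶜ := Finset.mem_compl.mpr (hempty (jj+1) hempty' v hvdiv)
          have hadjuv : G.Adj u v := by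
            refine ⟨?_, Or.inr (Or.inl ⟨by omega, humod⟩)⟩
            intro h
            have : (u:ℕ) = (v:ℕ) := congrArg Fin.val h
            omega
          exact hbr ⟨u, huS, v, hvS, hadjuv, by omega⟩
        have hbridge2 : ∀ jj, jj + 1 < c → a jj = 0 → a (jj+1) = tn → False := by
          intro jj hjc hempty' hfull'
          have hub : (jj+1)*tn - 1 < c*tn := by
            have : (jj+1)*tn ≤ c*tn := Nat.mul_le_mul_right _ (by omega)
            omega
          have hvb : (jj+1)*tn < c*tn := by
            have h3 : (jj+1+1)*tn ≤ c*tn := Nat.mul_le_mul_right _ (by omega)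
            have h4 : (jj+1+1)*tn = (jj+1)*tn + tn := by ring
            omega
          set u : Fin (c*tn) := ⟨(jj+1)*tn - 1, hub⟩ with hu
          set v : Fin (c*tn) := ⟨(jj+1)*tn, hvb⟩ with hv
          have huv : (u:ℕ) = (jj+1)*tn - 1 := rfl
          have hvv : (v:ℕ) = (jj+1)*tn := rfl
          have htnle : tn ≤ (jj+1)*tn := by
            calc tn = 1*tn := (Nat.one_mul tn).symm
            _ ≤ _ := Nat.mul_le_mul_right _ (by omega)
          have husucc : (u:ℕ) + 1 = (jj+1)*tn := by omega
          have humod : ((u:ℕ)+1) % tn = 0 := by rw [husucc]; exact Nat.mul_mod_left _ _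
          have hudiv : (u:ℕ)/tn = jj := by
            apply Nat.div_eq_of_lt_le
            · have : (jj+1)*tn = jj*tn + tn := by ring
              omega
            · have : (jj+1)*tn = jj*tn + tn := by ring
              omega
          have hvdiv : (v:ℕ)/tn = jj+1 := by
            apply Nat.div_eq_of_lt_le
            · exact le_refl _
            · have : (jj+1+1)*tn = (jj+1)*tn + tn := by ring
              omega
          have hvS : v ∈ S0 := hfull (jj+1) (by omega) hfull' v hvdiv
          have huS : u ∈ S0ᶜ := Finset.mem_compl.mpr (hempty jj hempty' u hudiv)
          have hadjvu : G.Adj v u := by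
            refine ⟨?_, Or.inr (Or.inr ⟨by omega, humod⟩)⟩
            intro h
            have : (v:ℕ) = (u:ℕ) := congrArg Fin.val h
            omega
          exact hbr ⟨v, hvS, u, huS, hadjvu, by omega⟩
        rcases lt_trichotomy k1 k2 with hlt | heq | hgt
        · obtain ⟨j, hj1, hj2, hj3, hj4⟩ := ivt (fun k => a k = tn) (k2 - k1) k1 hPk1
            (by rw [show k1 + (k2-k1) = k2 by omega]; exact hak2)
          have hj1c : j + 1 < c := by omega
          have : a (j+1) = 0 := by
            apply hallz
            apply Finset.mem_filter.mpr ⟨Finset.mem_range.mpr (by omega), hj4⟩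
          exact hbridge j hj1c hj3 this
        · exact hak2 (heq ▸ hPk1)
        · obtain ⟨j, hj1, hj2, hj3, hj4⟩ := ivt (fun k => ¬ (a k = tn)) (k1 - k2) k2 hak2
            (by rw [show k2 + (k1-k2) = k1 by omega]; exact not_not_intro hPk1)
          have hj1c : j + 1 < c := by omega
          have hjz : a j = 0 := by
            apply hallz
            apply Finset.mem_filter.mpr ⟨Finset.mem_range.mpr (by omega), hj3⟩
          have hjfull : a (j+1) = tn := not_not.mp hj4
          exact hbridge2 j hj1c hjz hjfull
      have hcore : s + f*tn ≤ 2*c0*X + c0*tn*0 :=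
        core c0 tn s f 0 X hc01 htn hX1 hX2 hfm hsz (fun _ => hbeta)
      rw [Nat.mul_zero, Nat.add_zero] at hcore
      have hcard_le : S0.card ≤ 2*c0*X := by
        calc S0.card = s + f*tn := by omega
          _ ≤ 2*c0*X := hcore
      have hc1 : ((S0.card:ℕ):ℝ) ≤ 2*(c0:ℝ)*(X:ℝ) := by
        calc ((S0.card:ℕ):ℝ) ≤ ((2*c0*X : ℕ):ℝ) := Nat.cast_le.mpr hcard_le
          _ = 2*(c0:ℝ)*(X:ℝ) := by push_cast; ring
      have hXnn : (0:ℝ) ≤ (X:ℝ) := Nat.cast_nonneg X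
      have hc0tnR : (0:ℝ) < ((c0*tn:ℕ):ℝ) := by exact_mod_cast hc0tn_pos
      push_cast
      push_cast at hc1 hc0tnR
      nlinarith [mul_le_mul_of_nonneg_left hnum_ge1 (le_of_lt hc0tnR),
        mul_nonneg (mul_nonneg (Nat.cast_nonneg c0 : (0:ℝ) ≤ c0) hXnn) (by linarith : (0:ℝ) ≤ w1*tn - wB*2)]
  -- finish
  rw [subsetConductance, subsetConductance, hVcard, ← hnum]
  rw [hnumV]
  rw [div_le_div_iff₀ (by exact_mod_cast hc0tn_pos) (by exact_mod_cast hScard_pos)]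
  have h1 : W i0 j0 ≤ wB := hW3 i0 j0 hadj0 hblk0
  have h2 : (0:ℝ) ≤ (S0.card:ℝ) := Nat.cast_nonneg _
  calc W i0 j0 * (S0.card:ℝ) ≤ wB * (S0.card:ℝ) := mul_le_mul_of_nonneg_right h1 h2
    _ = (S0.card:ℝ) * wB := by ring
    _ ≤ ((c0*tn : ℕ):ℝ) * num := hmain
    _ = num * ((c0*tn:ℕ):ℝ) := by ring
section Entries
variable {n : ℕ}

lemma gossipUnif_apply_ne (G : SimpleGraph (Fin n)) [DecidableRel G.Adj]
    (i j : Fin n) (h : i ≠ j) :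
    gossipUnif G i j = (probUnif G i j + probUnif G j i)/2 := by
  simp only [gossipUnif, Matrix.add_apply, Matrix.sub_apply, Matrix.smul_apply,
    Matrix.one_apply_ne h, Matrix.diagonal_apply_ne _ h, Matrix.transpose_apply,
    smul_eq_mul]
  ring

lemma probUnif_adj (G : SimpleGraph (Fin n)) [DecidableRel G.Adj] (i j : Fin n)
    (h : G.Adj i j) : probUnif G i j = 1 / ((n : ℝ) * (G.degree i : ℝ)) := by
  simp only [probUnif, Matrix.of_apply, if_pos h]

lemma probUnif_not_adj (G : SimpleGraph (Fin n)) [DecidableRel G.Adj] (i j : Fin n)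
    (h : ¬ G.Adj i j) : probUnif G i j = 0 := by
  simp only [probUnif, Matrix.of_apply, if_neg h]

end Entries

lemma gossipRes_apply_ne (c tn : ℕ) (i j : Fin (c*tn)) (h : i ≠ j) :
    gossipResCBarbell c tn i j = probResCBarbell c tn i j := by
  simp only [gossipResCBarbell, Matrix.add_apply, Matrix.sub_apply, Matrix.smul_apply,
    Matrix.one_apply_ne h, Matrix.diagonal_apply_ne _ h, smul_eq_mul]
  ring

/-- For `W` either the uniform-gossiping or the effective-resistance gossiping matrix of the
`c`-barbell graph, and any nonempty one-cut set `S₀` with `|S₀| ≤ n/2` (its complement induces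
a connected subgraph), there is `c₀ ∈ {1,…,⌊c/2⌋}` such that the first `c₀` blocks
`V_{c₀}` satisfy `Φ_{V_{c₀}}(W) ≤ Φ_{S₀}(W)`. -/
theorem stmt12 (c tn : ℕ) (hc : 2 ≤ c) (htn : 3 ≤ tn)
    (W : Matrix (Fin (c * tn)) (Fin (c * tn)) ℝ)
    (hW : W = gossipUnif (cBarbell c tn) ∨ W = gossipResCBarbell c tn)
    (S0 : Finset (Fin (c * tn)))
    (hS0ne : S0.Nonempty) (hS0card : 2 * S0.card ≤ c * tn)
    (hconn : ((cBarbell c tn).induce ((↑S0ᶜ : Set (Fin (c * tn))))).Connected) :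
    ∃ c0 : ℕ, 1 ≤ c0 ∧ c0 ≤ c / 2 ∧
      subsetConductance W (Finset.univ.filter (fun i => i.val < c0 * tn)) ≤
        subsetConductance W S0 := by
  have htn0 : 0 < tn := by omega
  have hn6 : 6 ≤ c*tn := by
    calc 6 = 2*3 := rfl
    _ ≤ c*tn := Nat.mul_le_mul hc htn
  have hnR : (6:ℝ) ≤ (c:ℝ)*(tn:ℝ) := by exact_mod_cast hn6
  have htnR : (3:ℝ) ≤ (tn:ℝ) := by exact_mod_cast htn
  rcases hW with rfl | rfl
  · -- uniform case
    set G := cBarbell c tn with hG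
    set wB : ℝ := 1/(((c*tn : ℕ):ℝ) * (tn:ℝ)) with hwBdef
    have hcast : ((c*tn : ℕ):ℝ) = (c:ℝ)*(tn:ℝ) := by push_cast; ring
    have hwB : 0 < wB := by
      rw [hwBdef, hcast]
      positivity
    have hdegpos : ∀ i j : Fin (c*tn), G.Adj i j → 0 < G.degree i := by
      intro i j h
      rw [G.degree_pos_iff_exists_adj i]
      exact ⟨j, h⟩
    have hentry_ge : ∀ i j : Fin (c*tn), G.Adj i j → wB ≤ gossipUnif G i j := by
      intro i j h
      rw [gossipUnif_apply_ne G i j h.ne, probUnif_adj G i j h, probUnif_adj G j i h.symm]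
      have h1 : 0 < (G.degree i : ℝ) := by exact_mod_cast hdegpos i j h
      have h2 : 0 < (G.degree j : ℝ) := by exact_mod_cast hdegpos j i h.symm
      have h3 : (G.degree i : ℝ) ≤ (tn:ℝ) := by exact_mod_cast degree_le_tn htn i
      have h4 : (G.degree j : ℝ) ≤ (tn:ℝ) := by exact_mod_cast degree_le_tn htn j
      have hnpos : (0:ℝ) < ((c*tn:ℕ):ℝ) := by rw [hcast]; linarith
      have e1 : 1/(((c*tn:ℕ):ℝ) * (tn:ℝ)) ≤ 1/(((c*tn:ℕ):ℝ) * (G.degree i : ℝ)) := by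
        apply one_div_le_one_div_of_le
        · positivity
        · exact mul_le_mul_of_nonneg_left h3 (le_of_lt hnpos)
      have e2 : 1/(((c*tn:ℕ):ℝ) * (tn:ℝ)) ≤ 1/(((c*tn:ℕ):ℝ) * (G.degree j : ℝ)) := by
        apply one_div_le_one_div_of_le
        · positivity
        · exact mul_le_mul_of_nonneg_left h4 (le_of_lt hnpos)
      rw [hwBdef]
      linarith
    apply main_aux c tn hc htn _ wB wB (le_of_lt hwB) hwB
      (by nlinarith) ?_ ?_ ?_ ?_ S0 hS0ne hS0card
    · -- hW0
      intro i j hne hnadj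
      rw [gossipUnif_apply_ne G i j hne, probUnif_not_adj G i j hnadj,
        probUnif_not_adj G j i (fun h => hnadj h.symm)]
      ring
    · intro i j hadj _
      exact hentry_ge i j hadj
    · intro i j hadj _
      exact hentry_ge i j hadj
    · -- hW3 : bridge entries are exactly wB
      intro i j hadj hblk
      obtain ⟨hne, hcase⟩ := hadj
      have hbr : (j.val = i.val + 1 ∧ (i.val+1) % tn = 0) ∨
          (i.val = j.val + 1 ∧ (j.val+1) % tn = 0) := by
        rcases hcase with h | h | h
        · exact absurd h hblk
        · exact Or.inl h
        · exact Or.inr h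
      have hdeg : G.degree i = tn ∧ G.degree j = tn := by
        rcases hbr with ⟨h1, h2⟩ | ⟨h1, h2⟩
        · constructor
          · exact degree_eq_left htn i h2 (by rw [← h1]; exact j.isLt)
          · apply degree_eq_right htn j (by rw [h1]; exact h2) (by omega)
        · constructor
          · apply degree_eq_right htn i (by rw [h1]; exact h2) (by omega)
          · exact degree_eq_left htn j h2 (by rw [← h1]; exact i.isLt)
      rw [gossipUnif_apply_ne G i j hne, probUnif_adj G i j ⟨hne, hcase⟩,
        probUnif_adj G j i (G.adj_symm ⟨hne, hcase⟩), hdeg.1, hdeg.2, hwBdef]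
      ring_nf
      exact le_refl _
  · -- effective resistance case
    set G := cBarbell c tn with hG
    set w1 : ℝ := 1/((tn:ℝ)*((c:ℝ)*(tn:ℝ)-1)) with hw1def
    set wB : ℝ := 1/(2*((c:ℝ)*(tn:ℝ)-1)) with hwBdef
    have hden : (0:ℝ) < (c:ℝ)*(tn:ℝ)-1 := by linarith
    have hw1 : 0 < w1 := by rw [hw1def]; positivity
    have hwB : 0 < wB := by rw [hwBdef]; positivity
    apply main_aux c tn hc htn _ w1 wB (le_of_lt hw1) hwB
      ?_ ?_ ?_ ?_ ?_ S0 hS0ne hS0card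
    · -- wB*2 ≤ w1*tn
      rw [hw1def, hwBdef]
      rw [div_mul_eq_mul_div, div_mul_eq_mul_div]
      rw [div_le_div_iff₀ (by positivity) (by positivity)]
      ring_nf
      nlinarith
    · intro i j hne hnadj
      rw [gossipRes_apply_ne c tn i j hne]
      simp only [probResCBarbell, Matrix.of_apply, if_neg hnadj]
    · intro i j hadj hblk
      rw [gossipRes_apply_ne c tn i j hadj.ne]
      simp only [probResCBarbell, Matrix.of_apply, if_pos hadj, if_pos hblk]
      exact le_refl _
    · intro i j hadj hblk
      rw [gossipRes_apply_ne c tn i j hadj.ne]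
      simp only [probResCBarbell, Matrix.of_apply, if_pos hadj, if_neg hblk]
      exact le_refl _
    · intro i j hadj hblk
      rw [gossipRes_apply_ne c tn i j hadj.ne]
      simp only [probResCBarbell, Matrix.of_apply, if_pos hadj, if_neg hblk]
      exact le_refl _
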